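/- For every positive integer n there exists a periodic point pₙ ∈ [−μν, μν] of f having least period n: fⁿ(pₙ) = pₙ and fᵏ(pₙ) ≠ pₙ for every integer k with 0 < k < n. -/

import Mathlib

open Set

/-- The piecewise-linear threshold map `f(1,1,·)` of the chaotic NOR gate. -/
noncomputable def fmap (μ ν : ℝ) : ℝ → ℝ := fun x =>
  if x ≤ -ν then (1 + μ) / (1 - μ) * (x + ν) - μ * ν
  else if x ≤ ν then μ * x
  else (1 + μ) / (1 - μ) * (x - ν) + μ * ν

/-- For every positive integer `n`, `f` has a periodic point in `[−μν, μν]` of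
least period `n`. -/
theorem fmap_exists_least_period (μ ν : ℝ) (hμ : 1 < μ) (hν : 0 < ν) :
    ∀ n : ℕ, 0 < n →
      ∃ p ∈ Icc (-(μ * ν)) (μ * ν),
        (fmap μ ν)^[n] p = p ∧
        ∀ k : ℕ, 0 < k → k < n → (fmap μ ν)^[k] p ≠ p := by
  intro n hn
  obtain ⟨m, rfl⟩ : ∃ m, n = m + 1 := ⟨n - 1, by omega⟩
  have hμ0 : (0:ℝ) < μ := by linarith
  have hm1 : (1:ℝ) ≤ μ ^ m := one_le_pow₀ hμ.le
  have hmpos : (0:ℝ) < μ ^ m := by positivity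
  set D : ℝ := μ * μ ^ m + μ ^ m + μ - 1 with hDdef
  have hDpos : 0 < D := by nlinarith
  set p : ℝ := ν * (1 + μ ^ 2) / D with hpdef
  have hp : 0 < p := by
    apply div_pos _ hDpos
    nlinarith
  have hgt : ν < μ ^ m * p := by
    rw [hpdef, ← mul_div_assoc, lt_div_iff₀ hDpos]
    nlinarith [mul_pos hν (mul_pos (sub_pos.2 hμ)
      (sub_pos.2 (show (1:ℝ) < μ * μ ^ m by nlinarith)))]
  have hlt : μ ^ m * p < μ * ν := by
    rw [hpdef, ← mul_div_assoc, div_lt_iff₀ hDpos]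
    nlinarith [mul_pos hν (sub_pos.2 hμ), mul_pos (mul_pos hν (sub_pos.2 hμ)) hmpos]
  have hmid : ∀ k, k ≤ m → (fmap μ ν)^[k] p = μ ^ k * p := by
    intro k hk
    induction k with
    | zero => simp
    | succ j ih =>
      have hj : j ≤ m := by omega
      rw [Function.iterate_succ_apply', ih hj]
      have hjp : (0:ℝ) < μ ^ j := by positivity
      have hle : μ ^ (j+1) ≤ μ ^ m := pow_le_pow_right₀ hμ.le hk
      have hstep : μ ^ (j+1) = μ * μ ^ j := by ring
      have h1 : μ ^ j * p ≤ ν := by nlinarith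
      have h2 : ¬ (μ ^ j * p ≤ -ν) := by nlinarith
      simp only [fmap, if_neg h2, if_pos h1]
      ring
  have hμ1 : (1:ℝ) - μ ≠ 0 := by linarith
  have hD0 : μ * μ ^ m + μ ^ m + μ - 1 ≠ 0 := by
    rw [← hDdef]; exact ne_of_gt hDpos
  have hiter : (fmap μ ν)^[m+1] p = p := by
    rw [Function.iterate_succ_apply', hmid m le_rfl]
    have h2 : ¬ (μ ^ m * p ≤ -ν) := by nlinarith
    have h1 : ¬ (μ ^ m * p ≤ ν) := not_le.2 hgt
    simp only [fmap, if_neg h2, if_neg h1]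
    rw [hpdef, hDdef]
    have hD' : μ ^ m * (μ + 1) + μ - 1 ≠ 0 := by intro h; apply hD0; linarith
    field_simp
    ring
  refine ⟨p, ⟨by nlinarith, by nlinarith⟩, hiter, ?_⟩
  intro k hk0 hk
  have hkm : k ≤ m := by omega
  rw [hmid k hkm]
  have : (1:ℝ) < μ ^ k := one_lt_pow₀ hμ (by omega)
  intro heq
  nlinarith
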